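/- arXiv:1202.0298 — 6 statements merged into one kernel-verified Lean document; each statement's English description precedes it below -/
import Mathlib

section
/- For every a > 0 and b > 0, the function f(x) = Γ(a, b·x^(1/a)) is convex on the interval (0, ∞). -/
open Real Set MeasureTheory

/-- The upper incomplete gamma function `Γ(s, x) = ∫_x^∞ t^(s-1) e^(-t) dt`. -/
noncomputable def upperIncompleteGamma (s x : ℝ) : ℝ :=
  ∫ t in Set.Ioi x, t ^ (s - 1) * Real.exp (-t)

/-- For `a > 0` and `b > 0`, the function `x ↦ Γ(a, b·x^(1/a))` is convex on `(0, ∞)`. -/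
theorem convexOn_upperIncompleteGamma_comp_rpow (a b : ℝ) (ha : 0 < a) (hb : 0 < b) :
    ConvexOn ℝ (Set.Ioi (0 : ℝ))
      (fun x : ℝ => upperIncompleteGamma a (b * x ^ (1 / a))) := by
  set h : ℝ → ℝ := fun t => t ^ (a - 1) * Real.exp (-t) with hdef
  have hint : IntegrableOn h (Ioi 0) := by
    have := Real.GammaIntegral_convergent ha
    simpa [hdef, mul_comm] using this
  have hcont : ContinuousOn h (Ioi 0) := by
    intro t ht
    exact ((Real.continuousAt_rpow_const t (a - 1) (Or.inl (ne_of_gt ht))).mul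
      ((Real.continuous_exp.comp continuous_neg).continuousAt)).continuousWithinAt
  -- derivative of the upper incomplete gamma function at y > 0
  have key : ∀ y : ℝ, 0 < y →
      HasDerivAt (fun u => upperIncompleteGamma a u) (-(h y)) y := by
    intro y hy
    have hIoc : ∀ u : ℝ, 0 < u →
        upperIncompleteGamma a u = (∫ t in Ioi (0:ℝ), h t) - ∫ t in (0:ℝ)..u, h t := by
      intro u hu
      have hsplit : (∫ t in Ioi (0:ℝ), h t)
          = (∫ t in Ioc (0:ℝ) u, h t) + ∫ t in Ioi u, h t := by
        rw [← setIntegral_union (Ioc_disjoint_Ioi le_rfl) measurableSet_Ioi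
          (hint.mono_set Ioc_subset_Ioi_self) (hint.mono_set (Ioi_subset_Ioi hu.le)),
          Ioc_union_Ioi_eq_Ioi hu.le]
      rw [intervalIntegral.integral_of_le hu.le]
      show (∫ t in Ioi u, h t) = _
      rw [hsplit]; ring
    have hii : IntervalIntegrable h volume 0 y := by
      rw [intervalIntegrable_iff_integrableOn_Ioc_of_le hy.le]
      exact hint.mono_set Ioc_subset_Ioi_self
    have hmeas : StronglyMeasurableAtFilter h (nhds y) volume :=
      hcont.stronglyMeasurableAtFilter isOpen_Ioi y hy
    have hcy : ContinuousAt h y := (hcont y hy).continuousAt (Ioi_mem_nhds hy)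
    have I := intervalIntegral.integral_hasDerivAt_right hii hmeas hcy
    have I2 : HasDerivAt (fun u => (∫ t in Ioi (0:ℝ), h t) - ∫ t in (0:ℝ)..u, h t)
        (-(h y)) y := by
      have I3 := (hasDerivAt_const y (∫ t in Ioi (0:ℝ), h t)).sub I
      rw [zero_sub] at I3
      exact I3
    exact I2.congr_of_eventuallyEq
      (Filter.eventuallyEq_of_mem (Ioi_mem_nhds hy) fun u hu => hIoc u hu)
  -- derivative of the composition
  have hF : ∀ x : ℝ, 0 < x →
      HasDerivAt (fun x : ℝ => upperIncompleteGamma a (b * x ^ (1 / a)))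
        (-(b ^ a / a) * Real.exp (-(b * x ^ (1 / a)))) x := by
    intro x hx
    have hxr : 0 < x ^ (1 / a) := Real.rpow_pos_of_pos hx _
    have hg : HasDerivAt (fun x : ℝ => b * x ^ (1 / a))
        (b * ((1 / a) * x ^ (1 / a - 1))) x :=
      (Real.hasDerivAt_rpow_const (Or.inl hx.ne')).const_mul b
    have hc := (key (b * x ^ (1 / a)) (by positivity)).comp x hg
    refine hc.congr_deriv ?_
    symm
    show -(b ^ a / a) * Real.exp (-(b * x ^ (1 / a)))
      = -((b * x ^ (1 / a)) ^ (a - 1) * Real.exp (-(b * x ^ (1 / a))))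
        * (b * ((1 / a) * x ^ (1 / a - 1)))
    rw [Real.mul_rpow hb.le hxr.le, ← Real.rpow_mul hx.le]
    have hx1 : x ^ ((1 / a) * (a - 1)) * x ^ (1 / a - 1) = 1 := by
      rw [← Real.rpow_add hx]
      have : (1 / a) * (a - 1) + (1 / a - 1) = 0 := by field_simp; ring
      rw [this, Real.rpow_zero]
    have hb1 : b ^ (a - 1) * b = b ^ a := by
      rw [← Real.rpow_add_one hb.ne' (a - 1)]; ring_nf
    calc -(b ^ a / a) * Real.exp (-(b * x ^ (1 / a)))
        = -((b ^ (a - 1) * b) * (x ^ ((1 / a) * (a - 1)) * x ^ (1 / a - 1))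
            * Real.exp (-(b * x ^ (1 / a))) * (1 / a)) := by rw [hb1, hx1]; ring
      _ = _ := by ring
  -- conclude via monotone derivative
  have hDiff : DifferentiableOn ℝ
      (fun x : ℝ => upperIncompleteGamma a (b * x ^ (1 / a))) (interior (Ioi 0)) := by
    rw [interior_Ioi]
    exact fun x hx => ((hF x hx).differentiableAt).differentiableWithinAt
  have hderiv : ∀ x : ℝ, 0 < x →
      deriv (fun x : ℝ => upperIncompleteGamma a (b * x ^ (1 / a))) x
        = -(b ^ a / a) * Real.exp (-(b * x ^ (1 / a))) := fun x hx => (hF x hx).deriv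
  refine MonotoneOn.convexOn_of_deriv (convex_Ioi 0)
    (hDiff.continuousOn.mono (by rw [interior_Ioi])) hDiff ?_
  rw [interior_Ioi]
  intro x hx y hy hxy
  rw [hderiv x hx, hderiv y hy]
  have h1 : Real.exp (-(b * y ^ (1 / a))) ≤ Real.exp (-(b * x ^ (1 / a))) := by
    apply Real.exp_le_exp.mpr
    have : x ^ (1 / a) ≤ y ^ (1 / a) :=
      Real.rpow_le_rpow (le_of_lt hx) hxy (by positivity)
    nlinarith
  have h2 : -(b ^ a / a) ≤ 0 := by
    have : 0 < b ^ a / a := by positivity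
    linarith
  exact mul_le_mul_of_nonpos_left h1 h2
end

section
/- Let a > 0, b > 0, M ≥ 1 a natural number, and x_1, …, x_M nonnegative real numbers. Then ∑_{i=1}^M Γ(a, b·x_i^(1/a)) ≥ M · Γ(a, b·((x_1 + ⋯ + x_M)/M)^(1/a)). -/
open Real Finset

lemma uig_integrableOn {a : ℝ} (ha : 0 < a) :
    MeasureTheory.IntegrableOn (fun t : ℝ => t ^ (a - 1) * Real.exp (-t)) (Set.Ioi 0) := by
  have := Real.GammaIntegral_convergent ha
  exact this.congr_fun (fun t _ => mul_comm _ _) measurableSet_Ioi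

lemma uig_eq_sub {a : ℝ} (ha : 0 < a) {y : ℝ} (hy : 0 ≤ y) :
    upperIncompleteGamma a y
      = upperIncompleteGamma a 0 - ∫ t in Set.Ioc 0 y, t ^ (a - 1) * Real.exp (-t) := by
  have hbase := uig_integrableOn ha
  have h1 : MeasureTheory.IntegrableOn (fun t : ℝ => t ^ (a - 1) * Real.exp (-t))
      (Set.Ioc 0 y) := hbase.mono_set Set.Ioc_subset_Ioi_self
  have h2 : MeasureTheory.IntegrableOn (fun t : ℝ => t ^ (a - 1) * Real.exp (-t))
      (Set.Ioi y) := hbase.mono_set (Set.Ioi_subset_Ioi hy)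
  have hsplit := MeasureTheory.setIntegral_union (Set.Ioc_disjoint_Ioi le_rfl)
    measurableSet_Ioi h1 h2 (f := fun t : ℝ => t ^ (a - 1) * Real.exp (-t))
  rw [Set.Ioc_union_Ioi_eq_Ioi hy] at hsplit
  unfold upperIncompleteGamma
  rw [hsplit]; ring

/-- Convexity of `x ↦ Γ(a, b x^(1/a))` on `[0, R]`. -/
lemma uig_convexOn {a b : ℝ} (ha : 0 < a) (hb : 0 < b) (R : ℝ) :
    ConvexOn ℝ (Set.Icc 0 R) (fun x => upperIncompleteGamma a (b * x ^ (1 / a))) := by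
  set h : ℝ → ℝ := fun t => t ^ (a - 1) * Real.exp (-t) with hh
  have hbase := uig_integrableOn ha
  have hameas : Measurable h := by
    exact (measurable_id.pow_const _).mul (measurable_id.neg.exp)
  -- the identity lemma applies since b * x^(1/a) ≥ 0 for x ≥ 0
  have hφpos : ∀ x : ℝ, 0 < x → 0 < b * x ^ (1 / a) := fun x hx =>
    mul_pos hb (Real.rpow_pos_of_pos hx _)
  have hφnonneg : ∀ x : ℝ, 0 ≤ x → 0 ≤ b * x ^ (1 / a) := fun x hx =>
    mul_nonneg hb.le (Real.rpow_nonneg hx _)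
  -- derivative formula
  have hd : ∀ x : ℝ, 0 < x →
      HasDerivAt (fun x => upperIncompleteGamma a (b * x ^ (1 / a)))
        (-(b ^ a / a * Real.exp (-(b * x ^ (1 / a))))) x := by
    intro x hx
    set y := b * x ^ (1 / a) with hy
    have hypos : 0 < y := hφpos x hx
    -- F u = ∫ t in 0..u, h t
    have hint : IntervalIntegrable h MeasureTheory.volume 0 y := by
      rw [intervalIntegrable_iff_integrableOn_Ioc_of_le hypos.le]
      exact hbase.mono_set Set.Ioc_subset_Ioi_self
    have hmeasAt : StronglyMeasurableAtFilter h (nhds y) :=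
      ⟨Set.univ, Filter.univ_mem, hameas.stronglyMeasurable.aestronglyMeasurable.restrict⟩
    have hcontAt : ContinuousAt h y := by
      apply ContinuousAt.mul
      · exact Real.continuousAt_rpow_const _ _ (Or.inl hypos.ne')
      · exact (continuous_exp.comp continuous_neg).continuousAt
    have hF : HasDerivAt (fun u => ∫ t in (0:ℝ)..u, h t) (h y) y :=
      intervalIntegral.integral_hasDerivAt_right hint hmeasAt hcontAt
    have hφ : HasDerivAt (fun x : ℝ => b * x ^ (1 / a)) (b * (1 / a * x ^ (1 / a - 1))) x :=
      (Real.hasDerivAt_rpow_const (Or.inl hx.ne')).const_mul b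
    have hcomp := (hF.comp x hφ).const_sub (upperIncompleteGamma a 0)
    have hEq : (fun x : ℝ => upperIncompleteGamma a (b * x ^ (1 / a)))
        =ᶠ[nhds x] (fun x => upperIncompleteGamma a 0 - ∫ t in (0:ℝ)..(b * x ^ (1/a)), h t) := by
      filter_upwards [eventually_gt_nhds hx] with z hz
      rw [intervalIntegral.integral_of_le (hφnonneg z hz.le),
        uig_eq_sub ha (hφnonneg z hz.le)]
    have hder := hcomp.congr_of_eventuallyEq hEq
    refine hder.congr_deriv ?_
    have hxa : (x : ℝ) ^ ((1:ℝ)/a) > 0 := Real.rpow_pos_of_pos hx _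
    have key : h y * (b * (1 / a * x ^ (1 / a - 1))) = b ^ a / a * Real.exp (-y) := by
      rw [hh]
      simp only [hy]
      rw [Real.mul_rpow hb.le (Real.rpow_nonneg hx.le _), ← Real.rpow_mul hx.le]
      have e1 : b ^ (a - 1) * x ^ (1 / a * (a - 1)) * Real.exp (-(b * x ^ (1 / a))) *
          (b * (1 / a * x ^ (1 / a - 1)))
          = b ^ (a - 1) * b * (x ^ (1 / a * (a - 1)) * x ^ (1 / a - 1)) *
            Real.exp (-(b * x ^ (1 / a))) / a := by ring
      rw [e1, ← Real.rpow_add hx, ← Real.rpow_add_one hb.ne']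
      have e2 : a - 1 + 1 = a := by ring
      have e3 : 1 / a * (a - 1) + (1 / a - 1) = 0 := by field_simp; ring
      rw [e2, e3, Real.rpow_zero, mul_one]
      ring
    rw [key]
  apply MonotoneOn.convexOn_of_deriv (convex_Icc 0 R)
  · -- continuity on Icc 0 R
    have hcontφ : Continuous (fun x : ℝ => b * x ^ (1 / a)) := by
      apply continuous_const.mul
      apply continuous_iff_continuousAt.2
      intro x
      exact Real.continuousAt_rpow_const _ _ (Or.inr (by positivity))
    set Q := max R 0 with hQ
    have hQnn : (0:ℝ) ≤ Q := le_max_right R 0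
    set R' := b * Q ^ (1 / a) with hR'
    have hmaps : Set.MapsTo (fun x : ℝ => b * x ^ (1 / a)) (Set.Icc 0 Q) (Set.Icc 0 R') := by
      intro x hx
      constructor
      · exact hφnonneg x hx.1
      · exact mul_le_mul_of_nonneg_left
          (Real.rpow_le_rpow hx.1 hx.2 (by positivity)) hb.le
    have hint' : MeasureTheory.IntegrableOn h (Set.Icc 0 R') := by
      rw [integrableOn_Icc_iff_integrableOn_Ioc' (by simp)]
      exact hbase.mono_set Set.Ioc_subset_Ioi_self
    have hcontP : ContinuousOn (fun u => ∫ t in Set.Ioc 0 u, h t) (Set.Icc 0 R') :=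
      intervalIntegral.continuousOn_primitive hint'
    have hcg : ContinuousOn
        (fun x => upperIncompleteGamma a 0 - ∫ t in Set.Ioc 0 (b * x ^ (1/a)), h t)
        (Set.Icc 0 Q) :=
      continuousOn_const.sub (hcontP.comp hcontφ.continuousOn hmaps)
    have hcg2 : ContinuousOn (fun x => upperIncompleteGamma a (b * x ^ (1 / a)))
        (Set.Icc 0 Q) := by
      apply hcg.congr
      intro x hx
      exact uig_eq_sub ha (hφnonneg x hx.1)
    exact hcg2.mono (Set.Icc_subset_Icc_right (le_max_left R 0))
  · rw [interior_Icc]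
    intro x hx
    exact ((hd x hx.1).differentiableAt).differentiableWithinAt
  · rw [interior_Icc]
    intro u hu v hv huv
    rw [(hd u hu.1).deriv, (hd v hv.1).deriv]
    have h1 : b * u ^ (1 / a) ≤ b * v ^ (1 / a) :=
      mul_le_mul_of_nonneg_left (Real.rpow_le_rpow hu.1.le huv (by positivity)) hb.le
    have h2 : Real.exp (-(b * v ^ (1 / a))) ≤ Real.exp (-(b * u ^ (1 / a))) :=
      Real.exp_le_exp.2 (neg_le_neg h1)
    have hc : 0 ≤ b ^ a / a := by positivity
    nlinarith

/-- Jensen-type inequality: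
`∑_{i=1}^M Γ(a, b·x_i^(1/a)) ≥ M · Γ(a, b·((x_1 + ⋯ + x_M)/M)^(1/a))`. -/
theorem sum_upperIncompleteGamma_ge (a b : ℝ) (ha : 0 < a) (hb : 0 < b)
    (M : ℕ) (hM : 1 ≤ M) (x : Fin M → ℝ) (hx : ∀ i, 0 ≤ x i) :
    (M : ℝ) * upperIncompleteGamma a (b * ((∑ i, x i) / M) ^ (1 / a)) ≤
      ∑ i, upperIncompleteGamma a (b * (x i) ^ (1 / a)) := by
  set S := ∑ i, x i with hS
  have hSnn : 0 ≤ S := Finset.sum_nonneg fun i _ => hx i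
  have hMpos : (0:ℝ) < M := by exact_mod_cast hM
  have hconv := uig_convexOn ha hb S
  have hw : ∀ i ∈ Finset.univ (α := Fin M), (0:ℝ) ≤ (M:ℝ)⁻¹ := fun _ _ => by positivity
  have hw1 : ∑ _i : Fin M, (M:ℝ)⁻¹ = 1 := by
    rw [Finset.sum_const, Finset.card_univ, Fintype.card_fin, nsmul_eq_mul]
    field_simp
  have hmem : ∀ i ∈ Finset.univ (α := Fin M), x i ∈ Set.Icc (0:ℝ) S := by
    intro i _
    exact ⟨hx i, Finset.single_le_sum (fun j _ => hx j) (Finset.mem_univ i)⟩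
  have hJ := hconv.map_sum_le hw hw1 hmem
  have hpt : ∑ i, (M:ℝ)⁻¹ • x i = S / M := by
    rw [← Finset.smul_sum, smul_eq_mul, ← hS, div_eq_inv_mul]
  rw [hpt] at hJ
  have := mul_le_mul_of_nonneg_left hJ hMpos.le
  calc (M : ℝ) * upperIncompleteGamma a (b * (S / M) ^ (1 / a))
      ≤ (M:ℝ) * ∑ i, (M:ℝ)⁻¹ * upperIncompleteGamma a (b * (x i) ^ (1 / a)) := this
    _ = ∑ i, upperIncompleteGamma a (b * (x i) ^ (1 / a)) := by
        rw [Finset.mul_sum]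
        apply Finset.sum_congr rfl
        intro i _
        field_simp
end

section
/- Let k ≥ 1 be a natural number, c > 0 a real number, M ≥ 1 a natural number, and let R_1, …, R_M and R be nonnegative real numbers satisfying ∑_{p=1}^M R_p^k ≤ M · R^k. Then ∑_{p=1}^M Γ(k/2, c·R_p²) ≥ M · Γ(k/2, c·R²). -/
open Real Finset

open MeasureTheory intervalIntegral in
lemma phi_integrableOn {a : ℝ} (ha : 0 < a) :
    IntegrableOn (fun t : ℝ => t ^ (a - 1) * Real.exp (-t)) (Set.Ioi 0) :=
  (Real.GammaIntegral_convergent ha).congr_fun (fun x _ => mul_comm _ _) measurableSet_Ioi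

lemma uig_split {a : ℝ} (ha : 0 < a) {y : ℝ} (hy : 0 ≤ y) :
    upperIncompleteGamma a y =
      upperIncompleteGamma a 0 - ∫ t in (0:ℝ)..y, t ^ (a - 1) * Real.exp (-t) := by
  have hint := phi_integrableOn ha
  rw [intervalIntegral.integral_of_le hy]
  have hsplit : upperIncompleteGamma a 0 =
      (∫ t in Set.Ioc 0 y, t ^ (a - 1) * Real.exp (-t)) + upperIncompleteGamma a y := by
    rw [upperIncompleteGamma, upperIncompleteGamma,
      ← MeasureTheory.setIntegral_union (Set.Ioc_disjoint_Ioi le_rfl)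
      measurableSet_Ioi (hint.mono_set Set.Ioc_subset_Ioi_self)
      (hint.mono_set (Set.Ioi_subset_Ioi hy)), Set.Ioc_union_Ioi_eq_Ioi hy]
  linarith [hsplit]

lemma uig_anti {a : ℝ} (ha : 0 < a) {y z : ℝ} (hy : 0 ≤ y) (hyz : y ≤ z) :
    upperIncompleteGamma a z ≤ upperIncompleteGamma a y := by
  apply MeasureTheory.setIntegral_mono_set
    ((phi_integrableOn ha).mono_set (Set.Ioi_subset_Ioi hy))
  · filter_upwards [MeasureTheory.ae_restrict_mem measurableSet_Ioi] with t ht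
    exact mul_nonneg (Real.rpow_nonneg (le_of_lt (lt_of_le_of_lt hy ht)) _) (Real.exp_nonneg _)
  · exact Filter.Eventually.of_forall fun t ht => lt_of_le_of_lt hyz ht

open MeasureTheory intervalIntegral in
lemma G_convexOn {a : ℝ} (ha : 0 < a) {c : ℝ} (hc : 0 < c) :
    ConvexOn ℝ (Set.Ici 0)
      (fun x : ℝ => upperIncompleteGamma a 0 -
        ∫ t in (0:ℝ)..(c * x ^ (1/a)), t ^ (a - 1) * Real.exp (-t)) := by
  set φ : ℝ → ℝ := fun t => t ^ (a - 1) * Real.exp (-t) with hφ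
  set q : ℝ := 1/a with hqdef
  have hq : 0 < q := by positivity
  set P : ℝ → ℝ := fun v => ∫ t in (0:ℝ)..v, φ t with hP
  have hφmeas : Measurable φ := by rw [hφ]; fun_prop
  have hG : ∀ x : ℝ, 0 < x → HasDerivAt
      (fun x : ℝ => upperIncompleteGamma a 0 - P (c * x ^ q))
      (-(φ (c * x ^ q) * (c * (q * x ^ (q - 1))))) x := by
    intro x hx
    have hux : 0 < c * x ^ q := mul_pos hc (Real.rpow_pos_of_pos hx q)
    have hu' : HasDerivAt (fun x : ℝ => c * x ^ q) (c * (q * x ^ (q - 1))) x :=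
      (Real.hasDerivAt_rpow_const (Or.inl hx.ne')).const_mul c
    have hfint : IntervalIntegrable φ volume 0 (c * x ^ q) := by
      rw [intervalIntegrable_iff, Set.uIoc_of_le hux.le]
      exact (phi_integrableOn ha).mono_set Set.Ioc_subset_Ioi_self
    have hPd : HasDerivAt P (φ (c * x ^ q)) (c * x ^ q) :=
      integral_hasDerivAt_right hfint
        (hφmeas.aestronglyMeasurable.stronglyMeasurableAtFilter)
        (((Real.continuousAt_rpow_const _ _ (Or.inl hux.ne'))).mul
          ((Real.continuous_exp.comp continuous_neg).continuousAt))
    exact (hPd.comp x hu').const_sub (upperIncompleteGamma a 0)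
  have hDval : ∀ x : ℝ, 0 < x →
      φ (c * x ^ q) * (c * (q * x ^ (q - 1))) = q * c ^ a * Real.exp (-(c * x ^ q)) := by
    intro x hx
    have h1 : (c * x ^ q) ^ (a - 1) = c ^ (a - 1) * x ^ (q * (a - 1)) := by
      rw [Real.mul_rpow hc.le (Real.rpow_nonneg hx.le _), Real.rpow_mul hx.le]
    have h2 : x ^ (q * (a - 1)) * x ^ (q - 1) = 1 := by
      rw [← Real.rpow_add hx]
      have : q * (a - 1) + (q - 1) = 0 := by rw [hqdef]; field_simp; ring
      rw [this, Real.rpow_zero]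
    have h3 : c ^ (a - 1) * c = c ^ a := by
      rw [← Real.rpow_add_one hc.ne']
      norm_num
    calc φ (c * x ^ q) * (c * (q * x ^ (q - 1)))
        = (c ^ (a-1) * c) * q * (x ^ (q * (a - 1)) * x ^ (q - 1)) * Real.exp (-(c * x ^ q)) := by
          rw [hφ]; dsimp only; rw [h1]; ring
      _ = q * c ^ a * Real.exp (-(c * x ^ q)) := by rw [h2, h3]; ring
  have hPc : ContinuousOn P (Set.Ici 0) := by
    intro v hv
    have hv0 : (0:ℝ) ≤ v := hv
    have hint : IntervalIntegrable φ volume (min 0 0) (max 0 (v + 1)) := by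
      rw [min_self, intervalIntegrable_iff, Set.uIoc_of_le (le_max_left _ _)]
      exact (phi_integrableOn ha).mono_set Set.Ioc_subset_Ioi_self
    have h1 : ContinuousWithinAt P (Set.Icc 0 (v + 1)) v :=
      continuousWithinAt_primitive (by simp) hint
    apply h1.mono_of_mem_nhdsWithin
    rw [← Set.Ici_inter_Iic]
    exact Filter.inter_mem self_mem_nhdsWithin
      (mem_nhdsWithin_of_mem_nhds (Iic_mem_nhds (by linarith)))
  have hucont : Continuous fun x : ℝ => c * x ^ q :=
    continuous_const.mul
      (continuous_iff_continuousAt.2 fun x => Real.continuousAt_rpow_const x q (Or.inr hq.le))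
  have hGc : ContinuousOn
      (fun x : ℝ => upperIncompleteGamma a 0 - P (c * x ^ q)) (Set.Ici 0) :=
    continuousOn_const.sub (hPc.comp hucont.continuousOn
      (fun x hx => mul_nonneg hc.le (Real.rpow_nonneg hx q)))
  have := MonotoneOn.convexOn_of_deriv (convex_Ici (0:ℝ)) hGc
    (by
      rw [interior_Ici]
      intro x hx
      exact ((hG x hx).differentiableAt).differentiableWithinAt)
    (by
      rw [interior_Ici]
      intro x hx y hy hxy
      rw [(hG x hx).deriv, (hG y hy).deriv, hDval x hx, hDval y hy]
      have hxy' : x ^ q ≤ y ^ q := Real.rpow_le_rpow (le_of_lt hx) hxy hq.le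
      have : Real.exp (-(c * y ^ q)) ≤ Real.exp (-(c * x ^ q)) := by
        apply Real.exp_le_exp.2; nlinarith
      nlinarith [Real.rpow_pos_of_pos hc a, Real.exp_pos (-(c * x ^ q)),
        mul_le_mul_of_nonneg_left this (mul_nonneg hq.le (Real.rpow_pos_of_pos hc a).le)])
  simpa [hqdef] using this

/-- If `∑_{p=1}^M R_p^k ≤ M · R^k` for nonnegative radii, then
`∑_{p=1}^M Γ(k/2, c·R_p²) ≥ M · Γ(k/2, c·R²)`. -/
theorem sum_upperIncompleteGamma_radii_ge (k : ℕ) (hk : 1 ≤ k) (c : ℝ) (hc : 0 < c)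
    (M : ℕ) (hM : 1 ≤ M) (R : Fin M → ℝ) (R₀ : ℝ)
    (hR : ∀ p, 0 ≤ R p) (hR₀ : 0 ≤ R₀)
    (hsum : ∑ p, R p ^ k ≤ (M : ℝ) * R₀ ^ k) :
    (M : ℝ) * upperIncompleteGamma ((k : ℝ) / 2) (c * R₀ ^ 2) ≤
      ∑ p, upperIncompleteGamma ((k : ℝ) / 2) (c * R p ^ 2) := by
  have hkpos : (0:ℝ) < (k:ℝ) := by exact_mod_cast hk
  set a : ℝ := (k:ℝ)/2 with hadef
  have ha : 0 < a := by rw [hadef]; positivity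
  have hM0 : (0:ℝ) < (M:ℝ) := by exact_mod_cast hM
  have hkey : ∀ r : ℝ, 0 ≤ r → ((r ^ k : ℝ)) ^ (1/a) = r ^ 2 := by
    intro r hr
    rw [← Real.rpow_natCast r k, ← Real.rpow_mul hr]
    have h2 : (k:ℝ) * (1/a) = 2 := by rw [hadef]; field_simp
    rw [h2, show ((2:ℝ)) = ((2:ℕ):ℝ) by norm_num, Real.rpow_natCast]
  set G : ℝ → ℝ := fun x => upperIncompleteGamma a 0 -
    ∫ t in (0:ℝ)..(c * x ^ (1/a)), t ^ (a - 1) * Real.exp (-t) with hGdef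
  have hGval : ∀ x : ℝ, 0 ≤ x → G x = upperIncompleteGamma a (c * x ^ (1/a)) := by
    intro x hx
    rw [hGdef]
    exact (uig_split ha (mul_nonneg hc.le (Real.rpow_nonneg hx _))).symm
  have hconv : ConvexOn ℝ (Set.Ici 0) G := G_convexOn ha hc
  have hjensen := hconv.map_sum_le (t := Finset.univ) (w := fun _ : Fin M => (M:ℝ)⁻¹)
      (p := fun p => R p ^ k) (fun i _ => by positivity)
      (by rw [Finset.sum_const, Finset.card_univ, Fintype.card_fin, nsmul_eq_mul,
        mul_inv_cancel₀ hM0.ne'])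
      (fun i _ => pow_nonneg (hR i) k)
  set avg : ℝ := (M:ℝ)⁻¹ * ∑ p, R p ^ k with havgdef
  have havg0 : 0 ≤ avg := by
    rw [havgdef]
    exact mul_nonneg (by positivity) (Finset.sum_nonneg fun p _ => pow_nonneg (hR p) k)
  have hsum' : ∑ p : Fin M, (M:ℝ)⁻¹ • (R p ^ k) = avg := by
    rw [havgdef, Finset.mul_sum]
    simp [smul_eq_mul]
  have havgle : avg ≤ R₀ ^ k := by
    rw [havgdef]
    rw [inv_mul_le_iff₀ hM0]
    exact hsum
  have h1 : upperIncompleteGamma a (c * R₀ ^ 2) ≤ G avg := by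
    rw [hGval avg havg0]
    apply uig_anti ha (mul_nonneg hc.le (Real.rpow_nonneg havg0 _))
    rw [← hkey R₀ hR₀]
    exact mul_le_mul_of_nonneg_left
      (Real.rpow_le_rpow havg0 havgle (by positivity)) hc.le
  rw [hsum'] at hjensen
  calc (M:ℝ) * upperIncompleteGamma a (c * R₀ ^ 2)
      ≤ (M:ℝ) * G avg := mul_le_mul_of_nonneg_left h1 hM0.le
    _ ≤ (M:ℝ) * ∑ p : Fin M, (M:ℝ)⁻¹ • G (R p ^ k) :=
        mul_le_mul_of_nonneg_left hjensen hM0.le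
    _ = ∑ p : Fin M, G (R p ^ k) := by
        rw [Finset.mul_sum]
        refine Finset.sum_congr rfl fun p _ => ?_
        rw [smul_eq_mul, ← mul_assoc, mul_inv_cancel₀ hM0.ne', one_mul]
    _ = ∑ p, upperIncompleteGamma a (c * R p ^ 2) := by
        refine Finset.sum_congr rfl fun p _ => ?_
        rw [hGval _ (pow_nonneg (hR p) k), hkey (R p) (hR p)]
end

section
/- Let k ≥ 1, σ > 0, and let μ be the measure on ℝ^k with density z ↦ (2πσ²)^(−k/2)·exp(−‖z‖²/(2σ²)) with respect to Lebesgue measure. For every Lebesgue-measurable set S ⊆ ℝ^k and every R ≥ 0 such that the Lebesgue volume of S is at most the Lebesgue volume of the closed ball of radius R centered at the origin, one has μ(S) ≤ μ(closed ball of radius R centered at the origin). -/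
open MeasureTheory Real

/-- Among measurable sets whose Lebesgue volume does not exceed that of the centered
closed ball of radius `R`, the centered Gaussian measure (with density
`z ↦ (2πσ²)^(−k/2)·exp(−‖z‖²/(2σ²))`) of the set is at most that of the ball. -/
theorem gaussian_measure_le_of_volume_le (k : ℕ) (hk : 1 ≤ k) (σ : ℝ) (hσ : 0 < σ)
    (S : Set (EuclideanSpace ℝ (Fin k))) (hS : MeasurableSet S) (R : ℝ) (hR : 0 ≤ R)
    (hvol : volume S ≤ volume (Metric.closedBall (0 : EuclideanSpace ℝ (Fin k)) R)) :
    (volume.withDensity fun z : EuclideanSpace ℝ (Fin k) =>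
        ENNReal.ofReal ((2 * π * σ ^ 2) ^ (-(k : ℝ) / 2) *
          Real.exp (-‖z‖ ^ 2 / (2 * σ ^ 2)))) S ≤
      (volume.withDensity fun z : EuclideanSpace ℝ (Fin k) =>
        ENNReal.ofReal ((2 * π * σ ^ 2) ^ (-(k : ℝ) / 2) *
          Real.exp (-‖z‖ ^ 2 / (2 * σ ^ 2))))
        (Metric.closedBall (0 : EuclideanSpace ℝ (Fin k)) R) := by
  set f : EuclideanSpace ℝ (Fin k) → ENNReal := fun z =>
    ENNReal.ofReal ((2 * π * σ ^ 2) ^ (-(k : ℝ) / 2) *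
      Real.exp (-‖z‖ ^ 2 / (2 * σ ^ 2))) with hf
  set B := Metric.closedBall (0 : EuclideanSpace ℝ (Fin k)) R with hB
  have hBm : MeasurableSet B := measurableSet_closedBall
  set μ := volume.withDensity f with hμ
  set c : ENNReal := ENNReal.ofReal ((2 * π * σ ^ 2) ^ (-(k : ℝ) / 2) *
      Real.exp (-R ^ 2 / (2 * σ ^ 2))) with hc
  have hσ2 : (0:ℝ) < 2 * σ ^ 2 := by positivity
  -- monotonicity facts
  have hub : ∀ z : EuclideanSpace ℝ (Fin k), z ∉ B → f z ≤ c := by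
    intro z hz
    have hz' : R ≤ ‖z‖ := by
      simp only [hB, Metric.mem_closedBall, dist_zero_right, not_le] at hz
      exact hz.le
    apply ENNReal.ofReal_le_ofReal
    apply mul_le_mul_of_nonneg_left _ (by positivity)
    apply Real.exp_le_exp.2
    have h2 : R ^ 2 ≤ ‖z‖ ^ 2 := pow_le_pow_left₀ hR hz' 2
    have := hσ2
    gcongr
  have hlb : ∀ z : EuclideanSpace ℝ (Fin k), z ∈ B → c ≤ f z := by
    intro z hz
    have hz' : ‖z‖ ≤ R := by
      simpa only [hB, Metric.mem_closedBall, dist_zero_right] using hz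
    apply ENNReal.ofReal_le_ofReal
    apply mul_le_mul_of_nonneg_left _ (by positivity)
    apply Real.exp_le_exp.2
    have h2 : ‖z‖ ^ 2 ≤ R ^ 2 := pow_le_pow_left₀ (norm_nonneg z) hz' 2
    gcongr
  -- Lebesgue volume comparison of differences
  have hvB : volume B ≠ ⊤ := (MeasureTheory.measure_closedBall_lt_top).ne
  have hvSB : volume (S ∩ B) ≠ ⊤ :=
    ((measure_mono Set.inter_subset_right).trans_lt hvB.lt_top).ne
  have hvolS : volume (S ∩ B) + volume (S \ B) = volume S :=
    measure_inter_add_diff S hBm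
  have hvolB : volume (S ∩ B) + volume (B \ S) = volume B := by
    rw [Set.inter_comm]; exact measure_inter_add_diff B hS
  have hdiff : volume (S \ B) ≤ volume (B \ S) := by
    have : volume (S ∩ B) + volume (S \ B) ≤ volume (S ∩ B) + volume (B \ S) := by
      rw [hvolS, hvolB]; exact hvol
    exact (ENNReal.add_le_add_iff_left hvSB).1 this
  -- Gaussian mass of differences
  have hμS : μ (S ∩ B) + μ (S \ B) = μ S := measure_inter_add_diff S hBm
  have hμB : μ (S ∩ B) + μ (B \ S) = μ B := by
    rw [Set.inter_comm]; exact measure_inter_add_diff B hS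
  have hμSB : μ (S \ B) ≤ c * volume (S \ B) := by
    rw [hμ, withDensity_apply f (hS.diff hBm)]
    calc ∫⁻ z in S \ B, f z ∂volume ≤ ∫⁻ _ in S \ B, c ∂volume :=
          setLIntegral_mono measurable_const (fun z hz => hub z hz.2)
      _ = c * volume (S \ B) := by rw [setLIntegral_const]
  have hμBS : c * volume (B \ S) ≤ μ (B \ S) := by
    rw [hμ, withDensity_apply f (hBm.diff hS)]
    calc c * volume (B \ S) = ∫⁻ _ in B \ S, c ∂volume := by rw [setLIntegral_const]
      _ ≤ ∫⁻ z in B \ S, f z ∂volume := by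
          refine setLIntegral_mono ?_ (fun z hz => hlb z hz.1)
          apply Measurable.ennreal_ofReal
          fun_prop
  have key : μ (S \ B) ≤ μ (B \ S) :=
    hμSB.trans ((mul_le_mul_right hdiff c).trans hμBS)
  calc μ S = μ (S ∩ B) + μ (S \ B) := hμS.symm
    _ ≤ μ (S ∩ B) + μ (B \ S) := add_le_add_right key _
    _ = μ B := hμB
end

section
/- Let v_1, …, v_N be vectors in ℝ^N, let h_1, …, h_N be nonnegative real numbers, let H = diag(h_1, …, h_N), let 1 ≤ k ≤ N, and set W = (‖v_1‖ + ⋯ + ‖v_N‖)/N. Then ∑_{S ⊆ {1,…,N}, |S| = k} √det(G_S) ≤ (max_{j=1,…,N} h_j)^k · C(N,k) · W^k, where for each k-element subset S, G_S is the k×k Gram matrix of the vectors (H v_i)_{i ∈ S} and C(N,k) is the binomial coefficient. -/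
open Finset

/-- The Euclidean norm on `Fin N → ℝ`. -/
noncomputable def euclNorm {N : ℕ} (v : Fin N → ℝ) : ℝ :=
  Real.sqrt (∑ i, v i ^ 2)

section Aux
open Matrix

lemma psd_det_le_prod_diag_fin {k : ℕ} {G : Matrix (Fin k) (Fin k) ℝ} (hG : G.PosSemidef) :
    G.det ≤ ∏ i, G i i := by
  haveI : WellFoundedLT (Fin k) := inferInstance
  obtain ⟨A, rfl⟩ : ∃ A : Matrix (Fin k) (Fin k) ℝ, G = Aᴴ * A := by
    classical
    open scoped MatrixOrder in
    exact CStarAlgebra.nonneg_iff_eq_star_mul_self.mp hG.nonneg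
  set u : Fin k → EuclideanSpace ℝ (Fin k) := fun i => (WithLp.equiv 2 _).symm (fun j => A j i) with hu
  have hdim : Module.finrank ℝ (EuclideanSpace ℝ (Fin k)) = Fintype.card (Fin k) := by simp
  set b : OrthonormalBasis (Fin k) ℝ (EuclideanSpace ℝ (Fin k)) :=
    InnerProductSpace.gramSchmidtOrthonormalBasis hdim u with hb
  have hinner : ∀ i l, (Aᴴ * A) i l = inner ℝ (u i) (u l) := by
    intro i l
    simp only [Matrix.mul_apply, PiLp.inner_apply, RCLike.inner_apply, hu, conjTranspose_apply,
      star_trivial]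
    simp [mul_comm]
  set M : Matrix (Fin k) (Fin k) ℝ := Matrix.of fun p i => (inner ℝ (b p) (u i) : ℝ) with hM
  have hMG : Mᵀ * M = Aᴴ * A := by
    ext i l
    rw [hinner i l]
    simp only [Matrix.mul_apply, hM, Matrix.transpose_apply, Matrix.of_apply]
    rw [← OrthonormalBasis.sum_inner_mul_inner b (u i) (u l)]
    congr 1; ext p
    rw [real_inner_comm (u i) (b p)]
  have hdet : (Aᴴ * A).det = ∏ i, (inner ℝ (b i) (u i) : ℝ)^2 := by
    rw [← hMG, Matrix.det_mul, Matrix.det_transpose, ← sq]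
    rw [Matrix.det_of_upperTriangular (M := M) ?_]
    · rw [← Finset.prod_pow]; rfl
    · intro i j hij
      exact InnerProductSpace.gramSchmidtOrthonormalBasis_inv_triangular hdim u hij
  rw [hdet]
  apply Finset.prod_le_prod (fun i _ => sq_nonneg _)
  intro i _
  rw [hinner i i, sq]
  calc (inner ℝ (b i) (u i) : ℝ) * inner ℝ (b i) (u i)
      ≤ inner ℝ (b i) (b i) * inner ℝ (u i) (u i) := real_inner_mul_inner_self_le _ _
    _ = inner ℝ (u i) (u i) := by
        rw [real_inner_self_eq_norm_sq, b.orthonormal.1 i]; simp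

lemma sqrt_prod' {ι : Type*} (s : Finset ι) (f : ι → ℝ) (hf : ∀ i ∈ s, 0 ≤ f i) :
    Real.sqrt (∏ i ∈ s, f i) = ∏ i ∈ s, Real.sqrt (f i) := by
  induction s using Finset.cons_induction with
  | empty => simp
  | cons a s ha ih =>
    rw [Finset.prod_cons, Finset.prod_cons, Real.sqrt_mul (hf a (Finset.mem_cons_self a s)),
      ih (fun i hi => hf i (Finset.mem_cons.mpr (Or.inr hi)))]

lemma psd_det_le_prod_diag {ι : Type*} [Fintype ι] [DecidableEq ι] {G : Matrix ι ι ℝ}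
    (hG : G.PosSemidef) : G.det ≤ ∏ i, G i i := by
  obtain ⟨m, ⟨e⟩⟩ : ∃ m : ℕ, Nonempty (ι ≃ Fin m) := ⟨_, ⟨Fintype.equivFin ι⟩⟩
  have h1 : G.det = (G.submatrix e.symm e.symm).det := (Matrix.det_submatrix_equiv_self e.symm G).symm
  rw [h1]
  have h2 := psd_det_le_prod_diag_fin (hG.submatrix e.symm)
  refine h2.trans (le_of_eq ?_)
  exact Equiv.prod_comp e.symm fun i => G i i

lemma sqrt_gram_det_le {ι : Type*} [Fintype ι] [DecidableEq ι] {n : ℕ} (u : ι → Fin n → ℝ) :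
    Real.sqrt (Matrix.det (Matrix.of fun i l : ι => ∑ j, u i j * u l j)) ≤
      ∏ i, euclNorm (u i) := by
  set B : Matrix (Fin n) ι ℝ := Matrix.of fun j i => u i j with hB
  have hG : (Matrix.of fun i l : ι => ∑ j, u i j * u l j) = Bᴴ * B := by
    ext i l
    simp [Matrix.mul_apply, hB]
  have hpsd : (Matrix.of fun i l : ι => ∑ j, u i j * u l j).PosSemidef := by
    rw [hG]; exact Matrix.posSemidef_conjTranspose_mul_self B
  calc Real.sqrt (Matrix.det (Matrix.of fun i l : ι => ∑ j, u i j * u l j))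
      ≤ Real.sqrt (∏ i, (Matrix.of fun i l : ι => ∑ j, u i j * u l j) i i) :=
        Real.sqrt_le_sqrt (psd_det_le_prod_diag hpsd)
    _ = ∏ i, euclNorm (u i) := by
        have hnn : ∀ i ∈ (Finset.univ : Finset ι), 0 ≤ ∑ j, u i j * u i j :=
          fun i _ => Finset.sum_nonneg fun j _ => mul_self_nonneg _
        simp only [Matrix.of_apply]
        rw [sqrt_prod' _ _ hnn]
        refine Finset.prod_congr rfl fun i _ => ?_
        simp [euclNorm, sq]

end Aux
section Aux2
open Finset

lemma extract {N t : ℕ} (ht : 1 ≤ t) (g : Finset (Fin N) → Fin N → ℝ) :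
    ∑ T ∈ powersetCard t (univ : Finset (Fin N)), ∑ i ∈ T, g T i
      = ∑ U ∈ powersetCard (t - 1) (univ : Finset (Fin N)), ∑ i ∈ Uᶜ, g (insert i U) i := by
  rw [Finset.sum_sigma', Finset.sum_sigma']
  refine Finset.sum_nbij' (fun p => ⟨p.1.erase p.2, p.2⟩) (fun p => ⟨insert p.2 p.1, p.2⟩)
    ?_ ?_ ?_ ?_ ?_
  · rintro ⟨T, i⟩ hp
    rw [Finset.mem_sigma] at hp
    obtain ⟨hT, hi⟩ := hp
    rw [Finset.mem_powersetCard_univ] at hT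
    rw [Finset.mem_sigma, Finset.mem_powersetCard_univ]
    exact ⟨by rw [Finset.card_erase_of_mem hi, hT], Finset.mem_compl.mpr (Finset.notMem_erase i T)⟩
  · rintro ⟨U, i⟩ hp
    rw [Finset.mem_sigma] at hp
    obtain ⟨hU, hi⟩ := hp
    rw [Finset.mem_powersetCard_univ] at hU
    rw [Finset.mem_sigma, Finset.mem_powersetCard_univ]
    refine ⟨?_, Finset.mem_insert_self i U⟩
    rw [Finset.card_insert_of_notMem (Finset.mem_compl.mp hi), hU]
    omega
  · rintro ⟨T, i⟩ hp
    rw [Finset.mem_sigma] at hp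
    exact Sigma.ext (Finset.insert_erase hp.2) (by simp)
  · rintro ⟨U, i⟩ hp
    rw [Finset.mem_sigma] at hp
    exact Sigma.ext (Finset.erase_insert (Finset.mem_compl.mp hp.2)) (by simp)
  · rintro ⟨T, i⟩ hp
    rw [Finset.mem_sigma] at hp
    simp only
    rw [Finset.insert_erase hp.2]

noncomputable def Ek {N : ℕ} (x : Fin N → ℝ) (t : ℕ) : ℝ :=
  ∑ S ∈ powersetCard t (univ : Finset (Fin N)), ∏ i ∈ S, x i

lemma Ek_nonneg {N : ℕ} {x : Fin N → ℝ} (hx : ∀ i, 0 ≤ x i) (t : ℕ) : 0 ≤ Ek x t :=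
  Finset.sum_nonneg fun S _ => Finset.prod_nonneg fun i _ => hx i

lemma ek_succ_eq {N t : ℕ} (ht : 1 ≤ t) (x : Fin N → ℝ) :
    (t : ℝ) * Ek x t
      = ∑ U ∈ powersetCard (t - 1) (univ : Finset (Fin N)),
          (∏ i ∈ U, x i) * ∑ i ∈ Uᶜ, x i := by
  have h := extract ht (fun T _ => ∏ i ∈ T, x i)
  have hL : ∑ T ∈ powersetCard t (univ : Finset (Fin N)), ∑ _i ∈ T, ∏ i ∈ T, x i
      = (t : ℝ) * Ek x t := by
    rw [Ek, Finset.mul_sum]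
    refine Finset.sum_congr rfl fun T hT => ?_
    rw [Finset.sum_const, Finset.mem_powersetCard_univ.mp hT, nsmul_eq_mul]
  rw [hL] at h
  rw [h]
  refine Finset.sum_congr rfl fun U hU => ?_
  rw [Finset.mul_sum]
  refine Finset.sum_congr rfl fun i hi => ?_
  rw [Finset.prod_insert (Finset.mem_compl.mp hi)]
  ring

lemma diag_eq {N t : ℕ} (ht : 1 ≤ t) (x : Fin N → ℝ) :
    ∑ T ∈ powersetCard t (univ : Finset (Fin N)), (∏ i ∈ T, x i) * ∑ i ∈ T, x i
      = ∑ U ∈ powersetCard (t - 1) (univ : Finset (Fin N)),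
          (∏ i ∈ U, x i) * ∑ i ∈ Uᶜ, (x i) ^ 2 := by
  have h := extract ht (fun T i => (∏ j ∈ T, x j) * x i)
  rw [show ∑ T ∈ powersetCard t (univ : Finset (Fin N)), ∑ i ∈ T, (∏ j ∈ T, x j) * x i
      = ∑ T ∈ powersetCard t (univ : Finset (Fin N)), (∏ i ∈ T, x i) * ∑ i ∈ T, x i from
    Finset.sum_congr rfl fun T _ => by rw [Finset.mul_sum]] at h
  rw [h]
  refine Finset.sum_congr rfl fun U hU => ?_
  rw [Finset.mul_sum]
  refine Finset.sum_congr rfl fun i hi => ?_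
  rw [Finset.prod_insert (Finset.mem_compl.mp hi)]
  ring

lemma step_c {N t : ℕ} (ht : 1 ≤ t) (x : Fin N → ℝ) :
    (t : ℝ) * ∑ T ∈ powersetCard t (univ : Finset (Fin N)),
        (∏ i ∈ T, x i) * ∑ i ∈ Tᶜ, x i
      = ∑ U ∈ powersetCard (t - 1) (univ : Finset (Fin N)),
          (∏ i ∈ U, x i) * ∑ i ∈ Uᶜ, x i * ((∑ j ∈ Uᶜ, x j) - x i) := by
  have h := extract ht (fun T i => (∏ j ∈ T, x j) * ∑ j ∈ Tᶜ, x j)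
  have hL : ∑ T ∈ powersetCard t (univ : Finset (Fin N)),
        ∑ _i ∈ T, ((∏ j ∈ T, x j) * ∑ j ∈ Tᶜ, x j)
      = (t : ℝ) * ∑ T ∈ powersetCard t (univ : Finset (Fin N)),
          (∏ i ∈ T, x i) * ∑ i ∈ Tᶜ, x i := by
    rw [Finset.mul_sum]
    refine Finset.sum_congr rfl fun T hT => ?_
    rw [Finset.sum_const, Finset.mem_powersetCard_univ.mp hT, nsmul_eq_mul]
  rw [hL] at h
  rw [h]
  refine Finset.sum_congr rfl fun U hU => ?_
  rw [Finset.mul_sum]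
  refine Finset.sum_congr rfl fun i hi => ?_
  have hiU : i ∉ U := Finset.mem_compl.mp hi
  rw [Finset.prod_insert hiU, Finset.compl_insert, Finset.sum_erase_eq_sub hi]
  ring

lemma key_ineq {N k : ℕ} (hk : 2 ≤ k) (hkN : k ≤ N) (x : Fin N → ℝ) (hx : ∀ i, 0 ≤ x i) :
    (k : ℝ) * N * Ek x k ≤ ((N : ℝ) - k + 1) * (∑ i, x i) * Ek x (k - 1) := by
  set D : ℝ := ∑ T ∈ powersetCard (k - 1) (univ : Finset (Fin N)),
      (∏ i ∈ T, x i) * ∑ i ∈ T, x i with hD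
  have hk1 : 1 ≤ k - 1 := by omega
  have hkk : (1:ℕ) ≤ k := by omega
  -- (k-1) * (k * Ek) ≤ (N - k + 1) * D
  have hmain : ((k : ℝ) - 1) * ((k : ℝ) * Ek x k) ≤ ((N : ℝ) - k + 1) * D := by
    have hc := step_c hk1 x
    have ha := ek_succ_eq hkk x
    rw [← ha] at hc
    have hcast : ((k - 1 : ℕ) : ℝ) = (k : ℝ) - 1 := by
      rw [Nat.cast_sub hkk]; simp
    rw [hcast] at hc
    rw [hc]
    have hb := diag_eq hk1 x
    rw [hD, hb, Finset.mul_sum]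
    refine Finset.sum_le_sum fun U hU => ?_
    have hUcard : U.card = k - 1 - 1 := Finset.mem_powersetCard_univ.mp hU
    have hA : ((Uᶜ : Finset (Fin N)).card : ℝ) = (N : ℝ) - (k : ℝ) + 2 := by
      rw [Finset.card_compl, hUcard, Fintype.card_fin]
      have h2 : k - 1 - 1 ≤ N := by omega
      rw [Nat.cast_sub h2]
      have : ((k - 1 - 1 : ℕ) : ℝ) = (k : ℝ) - 2 := by
        have : (k - 1 - 1) + 2 = k := by omega
        have := congrArg (Nat.cast : ℕ → ℝ) this
        push_cast at this
        linarith
      rw [this]; ring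
    have hR : ∑ i ∈ Uᶜ, x i * ((∑ j ∈ Uᶜ, x j) - x i)
        = (∑ i ∈ Uᶜ, x i) ^ 2 - ∑ i ∈ Uᶜ, x i ^ 2 := by
      simp only [mul_sub]
      rw [Finset.sum_sub_distrib, ← Finset.sum_mul, ← sq]
      congr 1
      exact Finset.sum_congr rfl fun i _ => by ring
    have hcauchy : (∑ i ∈ Uᶜ, x i) ^ 2 ≤ ((Uᶜ : Finset (Fin N)).card : ℝ) * ∑ i ∈ Uᶜ, x i ^ 2 := by
      exact_mod_cast sq_sum_le_card_mul_sum_sq (s := (Uᶜ : Finset (Fin N))) (f := x)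
    have hsq_nonneg : (0:ℝ) ≤ ∑ i ∈ Uᶜ, x i ^ 2 :=
      Finset.sum_nonneg fun i _ => sq_nonneg _
    have hRle : ∑ i ∈ Uᶜ, x i * ((∑ j ∈ Uᶜ, x j) - x i)
        ≤ ((N : ℝ) - k + 1) * ∑ i ∈ Uᶜ, x i ^ 2 := by
      rw [hR]
      have := hcauchy
      rw [hA] at this
      nlinarith
    have hprod : (0:ℝ) ≤ ∏ i ∈ U, x i := Finset.prod_nonneg fun i _ => hx i
    calc (∏ i ∈ U, x i) * ∑ i ∈ Uᶜ, x i * ((∑ j ∈ Uᶜ, x j) - x i)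
        ≤ (∏ i ∈ U, x i) * (((N : ℝ) - k + 1) * ∑ i ∈ Uᶜ, x i ^ 2) :=
          mul_le_mul_of_nonneg_left hRle hprod
      _ = ((N : ℝ) - k + 1) * ((∏ i ∈ U, x i) * ∑ i ∈ Uᶜ, x i ^ 2) := by ring
  -- split of (∑ x) * E_{k-1}
  have ha := ek_succ_eq hkk x
  have hsplit : (∑ i, x i) * Ek x (k - 1) = D + (k : ℝ) * Ek x k := by
    rw [ha, hD, Ek, Finset.mul_sum, ← Finset.sum_add_distrib]
    refine Finset.sum_congr rfl fun T _ => ?_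
    rw [← Finset.sum_add_sum_compl T x]
    ring
  have hEk : 0 ≤ Ek x k := Ek_nonneg hx k
  calc (k : ℝ) * N * Ek x k
      = ((k : ℝ) - 1) * ((k : ℝ) * Ek x k) + ((N : ℝ) - k + 1) * ((k : ℝ) * Ek x k) := by ring
    _ ≤ ((N : ℝ) - k + 1) * D + ((N : ℝ) - k + 1) * ((k : ℝ) * Ek x k) := by linarith [hmain]
    _ = ((N : ℝ) - k + 1) * (∑ i, x i) * Ek x (k - 1) := by rw [mul_assoc, hsplit]; ring

lemma maclaurin {N : ℕ} (x : Fin N → ℝ) (hx : ∀ i, 0 ≤ x i) :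
    ∀ k : ℕ, 1 ≤ k → k ≤ N → (N : ℝ) ^ k * Ek x k ≤ (N.choose k : ℝ) * (∑ i, x i) ^ k := by
  intro k
  induction k with
  | zero => intro h1 _; omega
  | succ k ih =>
    intro _ hkN
    rcases Nat.eq_zero_or_pos k with rfl | hk0
    · -- k + 1 = 1
      have h1 : Ek x 1 = ∑ i, x i := by
        have := ek_succ_eq (le_refl 1) x
        simpa [Finset.powersetCard_zero] using this
      simp [h1, Nat.choose_one_right]
    · have hk2 : 2 ≤ k + 1 := by omega
      have hkey := key_ineq hk2 hkN x hx
      simp only [Nat.add_sub_cancel] at hkey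
      have hS : 0 ≤ ∑ i, x i := Finset.sum_nonneg fun i _ => hx i
      have hih := ih hk0 (by omega)
      have hNk : (k : ℝ) ≤ (N : ℝ) := by exact_mod_cast (by omega : k ≤ N)
      push_cast at hkey
      have e : ((N : ℝ) - ((k : ℝ) + 1) + 1) = (N : ℝ) - k := by ring
      rw [e] at hkey
      have hch : ((N : ℝ) - k) * (N.choose k : ℝ) = ((k : ℝ) + 1) * (N.choose (k + 1) : ℝ) := by
        have hc := congrArg (Nat.cast : ℕ → ℝ) (Nat.choose_succ_right_eq N k)
        push_cast [Nat.cast_sub (by omega : k ≤ N)] at hc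
        linarith
      have hEk1 : 0 ≤ Ek x (k + 1) := Ek_nonneg hx _
      have step : ((k : ℝ) + 1) * ((N : ℝ) ^ (k + 1) * Ek x (k + 1))
          ≤ ((k : ℝ) + 1) * ((N.choose (k + 1) : ℝ) * (∑ i, x i) ^ (k + 1)) := by
        calc ((k : ℝ) + 1) * ((N : ℝ) ^ (k + 1) * Ek x (k + 1))
            = (N : ℝ) ^ k * (((k : ℝ) + 1) * (N : ℝ) * Ek x (k + 1)) := by ring
          _ ≤ (N : ℝ) ^ k * (((N : ℝ) - k) * (∑ i, x i) * Ek x k) :=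
              mul_le_mul_of_nonneg_left hkey (pow_nonneg (Nat.cast_nonneg N) k)
          _ = ((N : ℝ) - k) * (∑ i, x i) * ((N : ℝ) ^ k * Ek x k) := by ring
          _ ≤ ((N : ℝ) - k) * (∑ i, x i) * ((N.choose k : ℝ) * (∑ i, x i) ^ k) := by
              apply mul_le_mul_of_nonneg_left hih
              exact mul_nonneg (by linarith) hS
          _ = (((N : ℝ) - k) * (N.choose k : ℝ)) * (∑ i, x i) ^ (k + 1) := by ring
          _ = ((k : ℝ) + 1) * ((N.choose (k + 1) : ℝ) * (∑ i, x i) ^ (k + 1)) := by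
              rw [hch]; ring
      have hpos : (0:ℝ) < (k : ℝ) + 1 := by positivity
      have := le_of_mul_le_mul_left step hpos
      exact_mod_cast this

end Aux2

/-- For basis vectors `v_1, …, v_N` in `ℝ^N`, nonnegative fading gains `h`, `H = diag(h)`,
`1 ≤ k ≤ N` and `W` the mean of the norms of the `v_i`, the total faded parallelotope
volume over all `k`-element subsets is at most `(max_j h_j)^k · C(N,k) · W^k`. -/
theorem sum_gram_det_le (N : ℕ) (hN : 0 < N)
    (v : Fin N → (Fin N → ℝ)) (h : Fin N → ℝ) (hh : ∀ j, 0 ≤ h j)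
    (k : ℕ) (hk1 : 1 ≤ k) (hkN : k ≤ N) :
    ∑ S ∈ Finset.powersetCard k (Finset.univ : Finset (Fin N)),
        Real.sqrt
          (Matrix.det (Matrix.of fun i l : {x // x ∈ S} =>
            ∑ j, ((Matrix.diagonal h).mulVec (v i)) j *
              ((Matrix.diagonal h).mulVec (v l)) j)) ≤
      (Finset.univ.sup' (Finset.univ_nonempty_iff.mpr ⟨⟨0, hN⟩⟩) h) ^ k *
        (N.choose k : ℝ) * ((∑ i, euclNorm (v i)) / N) ^ k := by
  set M : ℝ := Finset.univ.sup' (Finset.univ_nonempty_iff.mpr ⟨⟨0, hN⟩⟩) h with hM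
  have hM0 : 0 ≤ M := le_trans (hh ⟨0, hN⟩) (Finset.le_sup' h (Finset.mem_univ _))
  set x : Fin N → ℝ := fun i => euclNorm (v i) with hx
  have hx0 : ∀ i, 0 ≤ x i := fun i => Real.sqrt_nonneg _
  -- pointwise norm bound
  have hnorm : ∀ i : Fin N, euclNorm ((Matrix.diagonal h).mulVec (v i)) ≤ M * x i := by
    intro i
    rw [euclNorm]
    have hle : ∑ j, ((Matrix.diagonal h).mulVec (v i)) j ^ 2 ≤ M ^ 2 * ∑ j, v i j ^ 2 := by
      rw [Finset.mul_sum]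
      refine Finset.sum_le_sum fun j _ => ?_
      rw [Matrix.mulVec_diagonal, mul_pow]
      have hjM : h j ≤ M := Finset.le_sup' h (Finset.mem_univ j)
      have : h j ^ 2 ≤ M ^ 2 := by nlinarith [hh j]
      nlinarith [sq_nonneg (v i j)]
    calc Real.sqrt (∑ j, ((Matrix.diagonal h).mulVec (v i)) j ^ 2)
        ≤ Real.sqrt (M ^ 2 * ∑ j, v i j ^ 2) := Real.sqrt_le_sqrt hle
      _ = M * x i := by
          rw [Real.sqrt_mul (sq_nonneg M), Real.sqrt_sq hM0]
          simp only [hx, euclNorm]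
  -- per-subset Hadamard bound
  have hsubset : ∀ S ∈ Finset.powersetCard k (Finset.univ : Finset (Fin N)),
      Real.sqrt
          (Matrix.det (Matrix.of fun i l : {x // x ∈ S} =>
            ∑ j, ((Matrix.diagonal h).mulVec (v i)) j *
              ((Matrix.diagonal h).mulVec (v l)) j))
        ≤ M ^ k * ∏ i ∈ S, x i := by
    intro S hS
    have hcard : S.card = k := Finset.mem_powersetCard_univ.mp hS
    calc Real.sqrt
          (Matrix.det (Matrix.of fun i l : {x // x ∈ S} =>
            ∑ j, ((Matrix.diagonal h).mulVec (v i)) j *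
              ((Matrix.diagonal h).mulVec (v l)) j))
        ≤ ∏ i : {x // x ∈ S}, euclNorm ((Matrix.diagonal h).mulVec (v i)) :=
          sqrt_gram_det_le (fun i : {x // x ∈ S} => (Matrix.diagonal h).mulVec (v i))
      _ = ∏ i ∈ S, euclNorm ((Matrix.diagonal h).mulVec (v i)) := by
          exact Finset.prod_coe_sort S (fun i => euclNorm ((Matrix.diagonal h).mulVec (v i)))
      _ ≤ ∏ i ∈ S, (M * x i) := by
          refine Finset.prod_le_prod (fun i _ => Real.sqrt_nonneg _) fun i _ => hnorm i
      _ = M ^ k * ∏ i ∈ S, x i := by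
          rw [Finset.prod_mul_distrib, Finset.prod_const, hcard]
  -- sum up and apply Maclaurin
  have hsum : ∑ S ∈ Finset.powersetCard k (Finset.univ : Finset (Fin N)),
      Real.sqrt
          (Matrix.det (Matrix.of fun i l : {x // x ∈ S} =>
            ∑ j, ((Matrix.diagonal h).mulVec (v i)) j *
              ((Matrix.diagonal h).mulVec (v l)) j))
        ≤ M ^ k * Ek x k := by
    rw [Ek, Finset.mul_sum]
    exact Finset.sum_le_sum hsubset
  refine hsum.trans ?_
  have hmac := maclaurin x hx0 k hk1 hkN
  have hNpow : (0:ℝ) < (N : ℝ) ^ k := by positivity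
  have hEk : Ek x k ≤ (N.choose k : ℝ) * ((∑ i, x i) / N) ^ k := by
    rw [div_pow, ← mul_div_assoc, le_div_iff₀ hNpow]
    calc Ek x k * (N:ℝ)^k = (N:ℝ)^k * Ek x k := by ring
      _ ≤ (N.choose k : ℝ) * (∑ i, x i) ^ k := hmac
  calc M ^ k * Ek x k ≤ M ^ k * ((N.choose k : ℝ) * ((∑ i, x i) / N) ^ k) :=
        mul_le_mul_of_nonneg_left hEk (pow_nonneg hM0 k)
    _ = M ^ k * (N.choose k : ℝ) * ((∑ i, euclNorm (v i)) / N) ^ k := by rw [hx]; ring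
end

section
/- Let M be an invertible N×N real matrix (N ≥ 1), let h_1, …, h_N be positive real numbers, H = diag(h_1, …, h_N), and σ > 0. Let d_min = inf{‖Mz‖ : z ∈ ℤ^N, z ≠ 0} and assume d_min > 0. Let V = {x ∈ ℝ^N : ‖x‖ ≤ ‖x − p‖ for all p ∈ HMℤ^N, p ≠ 0} be the Voronoi cell of the origin of the faded lattice. Then ∫_V (2πσ²)^(−N/2)·exp(−‖z‖²/(2σ²)) dz ≥ 1 − Γ(N/2, 𝓡²/(2σ²))/Γ(N/2), where 𝓡 = (d_min/2)·min_{j=1,…,N} h_j. -/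
open MeasureTheory Real Finset

open Set Metric in
lemma euclNorm_eq_norm {N : ℕ} (v : Fin N → ℝ) :
    euclNorm v = ‖(WithLp.equiv 2 (Fin N → ℝ)).symm v‖ := by
  rw [EuclideanSpace.norm_eq]
  simp [euclNorm, sq_abs]

lemma uig_zero {s : ℝ} (hs : 0 < s) : upperIncompleteGamma s 0 = Real.Gamma s := by
  rw [Real.Gamma_eq_integral hs]
  exact setIntegral_congr_fun measurableSet_Ioi fun t _ => mul_comm _ _

lemma euclNorm_continuous {N : ℕ} : Continuous (euclNorm (N := N)) := by
  unfold euclNorm; fun_prop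

section auxlemmas
open Set Metric

lemma tail_integral (n : ℕ) (hn : 1 ≤ n) (c : ℝ) (hc : 0 < c) (R : ℝ) (hR : 0 ≤ R) :
    ∫ r in Set.Ioi R, r ^ (n - 1) * Real.exp (-r ^ 2 / c)
      = c ^ ((n : ℝ) / 2) / 2 * upperIncompleteGamma ((n : ℝ) / 2) (R ^ 2 / c) := by
  set b := R ^ 2 / c with hbdef
  have hb : 0 ≤ b := by positivity
  have himg : (fun t => Real.sqrt (c * t)) '' Set.Ioi b = Set.Ioi R := by
    ext r
    constructor
    · rintro ⟨t, ht, rfl⟩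
      have ht' : b < t := ht
      have : R = Real.sqrt (c * b) := by
        rw [hbdef, mul_div_cancel₀ _ hc.ne', Real.sqrt_sq hR]
      rw [Set.mem_Ioi, this]
      exact Real.sqrt_lt_sqrt (by positivity) (by nlinarith)
    · intro hr
      have hr' : R < r := hr
      have hrpos : 0 < r := lt_of_le_of_lt hR hr'
      refine ⟨r ^ 2 / c, ?_, ?_⟩
      · simp only [Set.mem_Ioi, hbdef]
        exact div_lt_div_of_pos_right (by nlinarith) hc
      · simp only [mul_div_cancel₀ _ hc.ne']
        exact Real.sqrt_sq hrpos.le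
  have hderiv : ∀ t ∈ Set.Ioi b, HasDerivWithinAt (fun t => Real.sqrt (c * t))
      (c / (2 * Real.sqrt (c * t))) (Set.Ioi b) t := by
    intro t ht
    have htpos : 0 < t := lt_of_le_of_lt hb ht
    have h1 : HasDerivAt (fun t : ℝ => c * t) c t := by
      simpa using (hasDerivAt_id t).const_mul c
    have h2 := (Real.hasDerivAt_sqrt (by positivity : c * t ≠ 0)).comp t h1
    rw [show 1 / (2 * Real.sqrt (c * t)) * c = c / (2 * Real.sqrt (c * t)) by ring] at h2
    exact h2.hasDerivWithinAt
  have hinj : Set.InjOn (fun t => Real.sqrt (c * t)) (Set.Ioi b) := by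
    intro x hx y hy hxy
    have hx' : 0 < x := lt_of_le_of_lt hb hx
    have hy' : 0 < y := lt_of_le_of_lt hb hy
    have h3 : c * x = c * y := by
      have := congrArg (fun s => s ^ 2) hxy
      simpa [Real.sq_sqrt, (by positivity : (0:ℝ) ≤ c * x), (by positivity : (0:ℝ) ≤ c * y)]
        using this
    exact mul_left_cancel₀ hc.ne' h3
  rw [← himg, integral_image_eq_integral_abs_deriv_smul measurableSet_Ioi hderiv hinj]
  have hpt : ∀ t ∈ Set.Ioi b,
      |c / (2 * Real.sqrt (c * t))| •
        ((fun t => Real.sqrt (c * t)) t ^ (n - 1) * Real.exp (-((fun t => Real.sqrt (c * t)) t) ^ 2 / c))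
      = c ^ ((n : ℝ) / 2) / 2 * (t ^ ((n : ℝ) / 2 - 1) * Real.exp (-t)) := by
    intro t ht
    have htpos : 0 < t := lt_of_le_of_lt hb ht
    have hct : 0 < c * t := by positivity
    have hsq : Real.sqrt (c * t) ^ 2 = c * t := Real.sq_sqrt hct.le
    have hexp : Real.exp (-Real.sqrt (c * t) ^ 2 / c) = Real.exp (-t) := by
      rw [hsq, mul_comm c t, neg_div, mul_div_assoc, div_self hc.ne', mul_one]
    have hrp : Real.sqrt (c * t) = (c * t) ^ ((2:ℝ)⁻¹) := by
      rw [Real.sqrt_eq_rpow]; norm_num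
    have hpow : Real.sqrt (c * t) ^ (n - 1) = (c * t) ^ (((n:ℝ) - 1) / 2) := by
      rw [hrp, ← Real.rpow_natCast ((c*t) ^ ((2:ℝ)⁻¹)) (n-1), ← Real.rpow_mul hct.le]
      congr 1
      rw [Nat.cast_sub hn]
      push_cast
      ring
    have habs : |c / (2 * Real.sqrt (c * t))| = c / (2 * (c * t) ^ ((2:ℝ)⁻¹)) := by
      rw [abs_of_pos (by positivity), hrp]
    rw [smul_eq_mul, habs, hpow, hexp]
    have hne1 : c ^ ((2:ℝ)⁻¹) ≠ 0 := (Real.rpow_pos_of_pos hc _).ne'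
    have hne2 : t ^ ((2:ℝ)⁻¹) ≠ 0 := (Real.rpow_pos_of_pos htpos _).ne'
    have hkey : c / (2 * ((c * t) ^ ((2:ℝ)⁻¹))) * (c * t) ^ (((n:ℝ) - 1) / 2)
        = c ^ ((n:ℝ) / 2) / 2 * t ^ ((n:ℝ) / 2 - 1) := by
      rw [Real.mul_rpow hc.le htpos.le, Real.mul_rpow hc.le htpos.le,
        show ((n:ℝ)/2 - 1) = ((n:ℝ)-1)/2 - 2⁻¹ by ring,
        show ((n:ℝ)/2) = 1 + ((n:ℝ)-1)/2 - 2⁻¹ by ring,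
        Real.rpow_sub hc, Real.rpow_add hc, Real.rpow_one, Real.rpow_sub htpos]
      field_simp
    calc c / (2 * (c * t) ^ ((2:ℝ)⁻¹)) * ((c * t) ^ (((n:ℝ) - 1) / 2) * Real.exp (-t))
        = (c / (2 * ((c * t) ^ ((2:ℝ)⁻¹))) * (c * t) ^ (((n:ℝ) - 1) / 2)) * Real.exp (-t) := by
          ring
      _ = c ^ ((n:ℝ) / 2) / 2 * (t ^ ((n:ℝ) / 2 - 1) * Real.exp (-t)) := by rw [hkey]; ring
  rw [setIntegral_congr_fun measurableSet_Ioi hpt, MeasureTheory.integral_const_mul]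
  rfl

lemma gauss_tail (N : ℕ) (hN : 1 ≤ N) (σ : ℝ) (hσ : 0 < σ) (R : ℝ) (hR : 0 ≤ R) :
    ∫ x in (Metric.ball (0 : EuclideanSpace ℝ (Fin N)) R)ᶜ, Real.exp (-‖x‖ ^ 2 / (2 * σ ^ 2))
      = (2 * π * σ ^ 2) ^ ((N : ℝ) / 2) *
          upperIncompleteGamma ((N : ℝ) / 2) (R ^ 2 / (2 * σ ^ 2)) / Real.Gamma ((N : ℝ) / 2) := by
  haveI : Nonempty (Fin N) := ⟨⟨0, hN⟩⟩
  set E := EuclideanSpace ℝ (Fin N)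
  set F : ℝ → ℝ := Set.indicator (Set.Ici R) (fun r => Real.exp (-r ^ 2 / (2 * σ ^ 2))) with hF
  have h1 : ∫ x in (Metric.ball (0 : E) R)ᶜ, Real.exp (-‖x‖ ^ 2 / (2 * σ ^ 2))
      = ∫ x : E, F ‖x‖ := by
    classical
    rw [← integral_indicator measurableSet_ball.compl]
    congr 1
    funext x
    rw [hF, Set.indicator_apply]
    simp only [Set.mem_compl_iff, mem_ball_zero_iff, Set.mem_Ici, not_lt]
    simp [Set.indicator_apply]
  rw [h1, integral_fun_norm_addHaar volume F]
  have hdim : Module.finrank ℝ E = N := by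
    simp [E, finrank_euclideanSpace]
  rw [hdim]
  have h2 : ∀ y : ℝ, y ^ (N - 1) • F y
      = Set.indicator (Set.Ici R) (fun r => r ^ (N - 1) * Real.exp (-r ^ 2 / (2 * σ ^ 2))) y := by
    intro y
    by_cases hy : y ∈ Set.Ici R
    · rw [hF, Set.indicator_of_mem hy, Set.indicator_of_mem hy, smul_eq_mul]
    · rw [hF, Set.indicator_of_notMem hy, Set.indicator_of_notMem hy, smul_zero]
  simp only [h2]
  rw [integral_indicator measurableSet_Ici, Measure.restrict_restrict measurableSet_Ici]
  have h3 : (Set.Ici R ∩ Set.Ioi 0 : Set ℝ) =ᵐ[volume] Set.Ioi R := by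
    have e1 : (Set.Ici R : Set ℝ) =ᵐ[volume] Set.Ioi R := (Ioi_ae_eq_Ici (a := R)).symm
    exact (ae_eq_set_inter e1 (ae_eq_refl _)).trans
      (Filter.EventuallyEq.of_eq <| Set.inter_eq_left.mpr (fun x hx => lt_of_le_of_lt hR hx))
  rw [setIntegral_congr_set h3, tail_integral N hN (2 * σ ^ 2) (by positivity) R hR]
  have hvol : volume.real (Metric.ball (0 : E) 1)
      = Real.sqrt π ^ N / Real.Gamma ((N : ℝ) / 2 + 1) := by
    rw [measureReal_def, EuclideanSpace.volume_ball, Fintype.card_fin]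
    simp only [ENNReal.ofReal_one, one_pow, one_mul]
    rw [ENNReal.toReal_ofReal]
    positivity
  rw [hvol]
  -- algebra
  have hG : Real.Gamma ((N : ℝ) / 2) ≠ 0 :=
    (Real.Gamma_pos_of_pos (by positivity)).ne'
  have hGadd : Real.Gamma ((N : ℝ) / 2 + 1) = ((N : ℝ) / 2) * Real.Gamma ((N : ℝ) / 2) := by
    rw [Real.Gamma_add_one (by positivity)]
  have hsqrtpi : Real.sqrt π ^ N = π ^ ((N : ℝ) / 2) := by
    rw [Real.sqrt_eq_rpow, ← Real.rpow_natCast (π ^ ((1:ℝ)/2)) N, ← Real.rpow_mul pi_pos.le]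
    congr 1
    ring
  have hmul : (2 * π * σ ^ 2) ^ ((N : ℝ) / 2) = π ^ ((N : ℝ) / 2) * (2 * σ ^ 2) ^ ((N : ℝ) / 2) := by
    rw [show (2 * π * σ ^ 2) = π * (2 * σ ^ 2) by ring, Real.mul_rpow pi_pos.le (by positivity)]
  rw [hGadd, hsqrtpi, hmul, nsmul_eq_mul, smul_eq_mul]
  have hNne : (N : ℝ) ≠ 0 := by positivity
  field_simp

lemma gauss_integrable (N : ℕ) (σ : ℝ) (hσ : 0 < σ) :
    Integrable (fun x : EuclideanSpace ℝ (Fin N) => Real.exp (-‖x‖ ^ 2 / (2 * σ ^ 2))) := by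
  have hb : (0:ℝ) < ((1 / (2 * σ ^ 2) : ℝ) : ℂ).re := by
    rw [Complex.ofReal_re]; positivity
  have h := (GaussianFourier.integrable_cexp_neg_mul_sq_norm_add
    (V := EuclideanSpace ℝ (Fin N)) hb 0 0).norm
  refine h.congr (Filter.Eventually.of_forall fun x => ?_)
  have hz : (-((1 / (2 * σ ^ 2) : ℝ) : ℂ) * (‖x‖:ℂ) ^ 2 + 0 * ((inner ℝ (0 : EuclideanSpace ℝ (Fin N)) x : ℝ) : ℂ))
      = ((-‖x‖ ^ 2 / (2 * σ ^ 2) : ℝ) : ℂ) := by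
    push_cast
    ring
  simp only []
  rw [hz, Complex.norm_exp, Complex.ofReal_re]

end auxlemmas

/-- Pointwise Sphere Upper Bound: the Gaussian probability of the Voronoi cell of the
origin of the faded lattice `HMℤ^N` is at least the Gaussian probability of the ball
of radius `𝓡 = (d_min/2)·min_j h_j`, i.e. `1 − Γ(N/2, 𝓡²/(2σ²))/Γ(N/2)`. -/
theorem sphere_upper_bound_pointwise (N : ℕ) (hN : 1 ≤ N)
    (M : Matrix (Fin N) (Fin N) ℝ) (hM : IsUnit M.det)
    (h : Fin N → ℝ) (hh : ∀ j, 0 < h j) (σ : ℝ) (hσ : 0 < σ)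
    (dmin : ℝ)
    (hdmin : dmin = sInf {r : ℝ | ∃ z : Fin N → ℤ, z ≠ 0 ∧
      r = euclNorm (M.mulVec (fun i => (z i : ℝ)))})
    (hdpos : 0 < dmin)
    (V : Set (Fin N → ℝ))
    (hV : V = {x : Fin N → ℝ | ∀ p : Fin N → ℝ,
      (∃ z : Fin N → ℤ, z ≠ 0 ∧
        p = (Matrix.diagonal h).mulVec (M.mulVec (fun i => (z i : ℝ)))) →
      euclNorm x ≤ euclNorm (x - p)}) :
    1 - upperIncompleteGamma ((N : ℝ) / 2)
          ((dmin / 2 * Finset.univ.inf' (Finset.univ_nonempty_iff.mpr ⟨⟨0, hN⟩⟩) h) ^ 2 /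
            (2 * σ ^ 2)) /
        Real.Gamma ((N : ℝ) / 2) ≤
      ∫ z in V, (2 * π * σ ^ 2) ^ (-(N : ℝ) / 2) *
        Real.exp (-(euclNorm z) ^ 2 / (2 * σ ^ 2)) := by
  classical
  haveI : Nonempty (Fin N) := ⟨⟨0, hN⟩⟩
  set m : ℝ := Finset.univ.inf' (Finset.univ_nonempty_iff.mpr ⟨⟨0, hN⟩⟩) h with hm
  set R : ℝ := dmin / 2 * m with hRdef
  have hmpos : 0 < m := by
    rw [hm]
    exact (Finset.lt_inf'_iff _).mpr fun j _ => hh j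
  have hRpos : 0 < R := by
    rw [hRdef]
    exact mul_pos (by linarith) hmpos
  have hN' : (0:ℝ) < (N : ℝ) := by exact_mod_cast hN
  have hGpos : 0 < Real.Gamma ((N : ℝ) / 2) :=
    Real.Gamma_pos_of_pos (by positivity)
  -- V is closed, hence measurable
  have hVclosed : IsClosed V := by
    rw [hV]
    have heq : {x : Fin N → ℝ | ∀ p : Fin N → ℝ,
        (∃ z : Fin N → ℤ, z ≠ 0 ∧
          p = (Matrix.diagonal h).mulVec (M.mulVec (fun i => (z i : ℝ)))) →
        euclNorm x ≤ euclNorm (x - p)}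
        = ⋂ (p : Fin N → ℝ) (_ : ∃ z : Fin N → ℤ, z ≠ 0 ∧
            p = (Matrix.diagonal h).mulVec (M.mulVec (fun i => (z i : ℝ)))),
            {x : Fin N → ℝ | euclNorm x ≤ euclNorm (x - p)} := by
      ext x
      simp only [Set.mem_setOf_eq, Set.mem_iInter]
    rw [heq]
    refine isClosed_iInter fun p => isClosed_iInter fun _ => ?_
    exact isClosed_le euclNorm_continuous
      (euclNorm_continuous.comp (continuous_id.sub continuous_const))
  -- transfer the integral to EuclideanSpace
  have hMP := EuclideanSpace.volume_preserving_symm_measurableEquiv_toLp (Fin N)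
  have htrans := hMP.setIntegral_preimage_emb
    (MeasurableEquiv.measurableEmbedding _)
    (fun z => (2 * π * σ ^ 2) ^ (-(N : ℝ) / 2) *
      Real.exp (-(euclNorm z) ^ 2 / (2 * σ ^ 2))) V
  rw [← htrans]
  have hnorm : ∀ x : EuclideanSpace ℝ (Fin N),
      euclNorm ((MeasurableEquiv.toLp 2 (Fin N → ℝ)).symm x) = ‖x‖ := fun x => by
    have hxx : ((WithLp.equiv 2 (Fin N → ℝ)).symm
        ((MeasurableEquiv.toLp 2 (Fin N → ℝ)).symm x)) = x := by
      rfl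
    rw [euclNorm_eq_norm, hxx]
  simp only [hnorm]
  -- the ball is contained in the preimage of V
  have hsub : Metric.ball (0 : EuclideanSpace ℝ (Fin N)) R
      ⊆ (MeasurableEquiv.toLp 2 (Fin N → ℝ)).symm ⁻¹' V := by
    intro x hx
    rw [Set.mem_preimage, hV]
    rintro p ⟨z, hz, hp⟩
    set y : Fin N → ℝ := M.mulVec (fun i => (z i : ℝ)) with hy
    have hdy : dmin ≤ euclNorm y := by
      rw [hdmin]
      apply csInf_le
      · refine ⟨0, fun r hr => ?_⟩
        obtain ⟨z', _, rfl⟩ := hr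
        exact Real.sqrt_nonneg _
      · exact ⟨z, hz, rfl⟩
    have hpnorm : m * euclNorm y ≤ euclNorm p := by
      have hstep : m * euclNorm y = Real.sqrt (∑ i, (m * y i) ^ 2) := by
        simp only [euclNorm]
        rw [← Real.sqrt_sq hmpos.le, ← Real.sqrt_mul (sq_nonneg m), Finset.mul_sum]
        congr 1
        exact Finset.sum_congr rfl fun i _ => by
          rw [Real.sqrt_sq hmpos.le]; ring
      have hterm : ∀ i, (m * y i) ^ 2 ≤ (p i) ^ 2 := by
        intro i
        rw [hp, Matrix.mulVec_diagonal]
        have hmle : m ≤ h i := Finset.inf'_le _ (Finset.mem_univ i)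
        have h2 : m ^ 2 ≤ (h i) ^ 2 := by nlinarith [hmpos.le]
        calc (m * y i) ^ 2 = m ^ 2 * (y i) ^ 2 := by ring
          _ ≤ (h i) ^ 2 * (y i) ^ 2 :=
              mul_le_mul_of_nonneg_right h2 (sq_nonneg _)
          _ = (h i * y i) ^ 2 := by ring
      rw [hstep]
      exact Real.sqrt_le_sqrt (Finset.sum_le_sum fun i _ => hterm i)
    have hplarge : 2 * R ≤ euclNorm p := by
      have : m * dmin ≤ m * euclNorm y := by
        exact mul_le_mul_of_nonneg_left hdy hmpos.le
      rw [hRdef]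
      nlinarith
    have hxball : ‖x‖ < R := by simpa [mem_ball_zero_iff] using hx
    have hex : euclNorm ((MeasurableEquiv.toLp 2 (Fin N → ℝ)).symm x) = ‖x‖ := hnorm x
    have hform : euclNorm ((MeasurableEquiv.toLp 2 (Fin N → ℝ)).symm x - p)
        = ‖x - (WithLp.equiv 2 (Fin N → ℝ)).symm p‖ := by
      rw [euclNorm_eq_norm]
      rfl
    have hP : euclNorm p = ‖(WithLp.equiv 2 (Fin N → ℝ)).symm p‖ := euclNorm_eq_norm p
    rw [hex, hform]
    have htri := norm_sub_norm_le ((WithLp.equiv 2 (Fin N → ℝ)).symm p) x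
    rw [norm_sub_rev] at htri
    rw [hP] at hplarge
    linarith
  -- integrability
  have hint : Integrable (fun x : EuclideanSpace ℝ (Fin N) =>
      (2 * π * σ ^ 2) ^ (-(N : ℝ) / 2) * Real.exp (-‖x‖ ^ 2 / (2 * σ ^ 2))) :=
    (gauss_integrable N σ hσ).const_mul _
  have hWmeas : MeasurableSet ((MeasurableEquiv.toLp 2 (Fin N → ℝ)).symm ⁻¹' V) :=
    (MeasurableEquiv.toLp 2 (Fin N → ℝ)).symm.measurable hVclosed.measurableSet
  have hmono : (∫ x in Metric.ball (0 : EuclideanSpace ℝ (Fin N)) R,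
        (2 * π * σ ^ 2) ^ (-(N : ℝ) / 2) * Real.exp (-‖x‖ ^ 2 / (2 * σ ^ 2)))
      ≤ ∫ x in (MeasurableEquiv.toLp 2 (Fin N → ℝ)).symm ⁻¹' V,
        (2 * π * σ ^ 2) ^ (-(N : ℝ) / 2) * Real.exp (-‖x‖ ^ 2 / (2 * σ ^ 2)) :=
    setIntegral_mono_set hint.integrableOn
      (Filter.Eventually.of_forall fun x => by positivity)
      (HasSubset.Subset.eventuallyLE hsub)
  have hsplit := integral_add_compl
    (measurableSet_ball (x := (0 : EuclideanSpace ℝ (Fin N))) (ε := R)) hint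
  -- value of the tail integral
  have htail := gauss_tail N hN σ hσ R hRpos.le
  have hcmul : (2 * π * σ ^ 2) ^ (-(N : ℝ) / 2) * (2 * π * σ ^ 2) ^ ((N : ℝ) / 2) = 1 := by
    rw [← Real.rpow_add (by positivity), show -(N : ℝ) / 2 + (N : ℝ) / 2 = 0 by ring,
      Real.rpow_zero]
  have htailc : (∫ x in (Metric.ball (0 : EuclideanSpace ℝ (Fin N)) R)ᶜ,
        (2 * π * σ ^ 2) ^ (-(N : ℝ) / 2) * Real.exp (-‖x‖ ^ 2 / (2 * σ ^ 2)))
      = upperIncompleteGamma ((N : ℝ) / 2) (R ^ 2 / (2 * σ ^ 2)) /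
          Real.Gamma ((N : ℝ) / 2) := by
    rw [MeasureTheory.integral_const_mul, htail, ← mul_div_assoc, ← mul_assoc, hcmul, one_mul]
  -- value of the total integral
  have htot : (∫ x : EuclideanSpace ℝ (Fin N),
        (2 * π * σ ^ 2) ^ (-(N : ℝ) / 2) * Real.exp (-‖x‖ ^ 2 / (2 * σ ^ 2))) = 1 := by
    have h0 := gauss_tail N hN σ hσ 0 le_rfl
    rw [show (Metric.ball (0 : EuclideanSpace ℝ (Fin N)) 0)ᶜ = Set.univ by
        simp [Metric.ball_zero], setIntegral_univ] at h0
    rw [show (0:ℝ) ^ 2 / (2 * σ ^ 2) = 0 by norm_num] at h0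
    rw [MeasureTheory.integral_const_mul, h0, uig_zero (by positivity),
      mul_div_assoc, div_self hGpos.ne', mul_one, hcmul]
  have hball : (∫ x in Metric.ball (0 : EuclideanSpace ℝ (Fin N)) R,
        (2 * π * σ ^ 2) ^ (-(N : ℝ) / 2) * Real.exp (-‖x‖ ^ 2 / (2 * σ ^ 2)))
      = 1 - upperIncompleteGamma ((N : ℝ) / 2) (R ^ 2 / (2 * σ ^ 2)) /
          Real.Gamma ((N : ℝ) / 2) := by
    rw [← htot, ← hsplit, htailc]
    ring
  linarith [hmono, hball.ge, hball.le]
end
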